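/- Let q ≥ 2 and m ≥ 1 be integers, let ε ∈ (0,1) be a real satisfying (1 − q^{−2/3})^{q^{1/3}} ≥ 1 − ε/2, and let s = ⌊q^{1/3}⌋ with s ≥ 1. Let X(1), …, X(s) be independent random strings in ([q])^m, each of whose m symbols is independent and uniformly distributed on [q]. Then the probability that the indexed family (X(c))_{c∈[s]} collides on more than ε·m coordinates is at most exp(−ε²·m/8). -/

import Mathlib

lemma analytic_key (ε : ℝ) (hε0 : 0 < ε) (hε1 : ε < 1) :
    1 + ε / 2 ≤ (2 : ℝ) ^ ε * Real.exp (-(ε ^ 2 / 8)) := by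
  have h2 : (2 : ℝ) ^ ε = Real.exp (ε * Real.log 2) := by
    rw [Real.rpow_def_of_pos (by norm_num)]; ring_nf
  rw [h2, ← Real.exp_add]
  have h1 : 1 + ε / 2 ≤ Real.exp (ε / 2) := by
    have := Real.add_one_le_exp (ε / 2); linarith
  refine h1.trans (Real.exp_le_exp.mpr ?_)
  have hl : (0.6931471803 : ℝ) < Real.log 2 := Real.log_two_gt_d9
  nlinarith

lemma ncard_filter {α : Type*} [Fintype α] (P : α → Prop) [DecidablePred P] :
    ({x | P x} : Set α).ncard = (Finset.univ.filter P).card := by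
  rw [← Set.ncard_coe_finset]
  congr 1
  ext x; simp

lemma inj_count (s q : ℕ) :
    (Finset.univ.filter (fun c : Fin s → Fin q => Function.Injective c)).card
      = q.descFactorial s := by
  classical
  rw [← Fintype.card_subtype]
  rw [Fintype.card_congr (Equiv.subtypeInjectiveEquivEmbedding (Fin s) (Fin q))]
  simp [Fintype.card_embedding_eq]

lemma desc_lb (q s : ℕ) (hq : 2 ≤ q) (hs : s = ⌊(q : ℝ) ^ ((1 : ℝ) / 3)⌋₊)
    (ε : ℝ)
    (hq' : 1 - ε / 2 ≤ (1 - (q : ℝ) ^ (-(2 : ℝ) / 3)) ^ ((q : ℝ) ^ ((1 : ℝ) / 3))) :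
    (1 - ε / 2) * (q : ℝ) ^ s ≤ (q.descFactorial s : ℝ) := by
  have hq1 : (1 : ℝ) < q := by exact_mod_cast hq
  have hq0 : (0 : ℝ) < q := by linarith
  set δ : ℝ := (q : ℝ) ^ (-(2 : ℝ) / 3) with hδ
  have hδ0 : 0 < δ := Real.rpow_pos_of_pos hq0 _
  have hδ1 : δ < 1 := Real.rpow_lt_one_of_one_lt_of_neg hq1 (by norm_num)
  have hsle : (s : ℝ) ≤ (q : ℝ) ^ ((1 : ℝ) / 3) := by
    rw [hs]; exact Nat.floor_le (Real.rpow_nonneg hq0.le _)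
  have hqδ : (q : ℝ) * δ = (q : ℝ) ^ ((1 : ℝ) / 3) := by
    rw [hδ, ← Real.rpow_one_add' hq0.le (by norm_num)]
    norm_num
  have hfac : ∀ i ∈ Finset.range s, (1 - δ) * (q : ℝ) ≤ ((q - i : ℕ) : ℝ) := by
    intro i hi
    have hi' : i < s := Finset.mem_range.mp hi
    have hsq : (s : ℝ) ≤ q := hsle.trans (by
      calc (q:ℝ) ^ ((1:ℝ)/3) ≤ (q:ℝ) ^ (1:ℝ) :=
            Real.rpow_le_rpow_of_exponent_le hq1.le (by norm_num)
        _ = q := Real.rpow_one _)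
    have hiq : i ≤ q := by exact_mod_cast (le_of_lt (lt_of_lt_of_le hi' (by exact_mod_cast hsq)))
    rw [Nat.cast_sub hiq]
    have : (i : ℝ) < s := by exact_mod_cast hi'
    nlinarith [hqδ, hsle]
  have h1 : ((1 - δ) * (q : ℝ)) ^ s ≤ (q.descFactorial s : ℝ) := by
    rw [Nat.descFactorial_eq_prod_range, Nat.cast_prod]
    calc ((1 - δ) * (q : ℝ)) ^ s = ∏ _i ∈ Finset.range s, ((1 - δ) * (q : ℝ)) := by
          rw [Finset.prod_const, Finset.card_range]
      _ ≤ ∏ i ∈ Finset.range s, ((q - i : ℕ) : ℝ) :=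
          Finset.prod_le_prod (fun i _ => by nlinarith) hfac
  refine le_trans ?_ h1
  rw [mul_pow, mul_comm ((1-δ)^s)]
  rw [mul_comm (1 - ε/2)]
  apply mul_le_mul_of_nonneg_left ?_ (by positivity)
  calc (1 - ε / 2) ≤ (1 - δ) ^ ((q : ℝ) ^ ((1 : ℝ) / 3)) := hq'
    _ ≤ (1 - δ) ^ ((s : ℝ)) :=
        Real.rpow_le_rpow_of_exponent_ge (by linarith) (by linarith) hsle
    _ = (1 - δ) ^ s := Real.rpow_natCast _ s

lemma sum_prod_cols (s m q : ℕ) (g : (Fin s → Fin q) → ℝ) :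
    ∑ ω : Fin s → Fin m → Fin q, ∏ j : Fin m, g (fun i => ω i j)
      = (∑ c : Fin s → Fin q, g c) ^ m := by
  rw [← Equiv.sum_comp (Equiv.piComm (fun (_ : Fin m) (_ : Fin s) => Fin q))
      (fun ω => ∏ j : Fin m, g (fun i => ω i j))]
  have : (fun ω' : Fin m → Fin s → Fin q =>
      ∏ j : Fin m, g (fun i => Equiv.piComm (fun (_ : Fin m) (_ : Fin s) => Fin q) ω' i j))
      = fun ω' => ∏ j : Fin m, g (ω' j) := rfl
  rw [this]
  rw [← Fintype.piFinset_univ, ← Finset.prod_univ_sum]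
  simp [Finset.prod_const]

/-- The per-subset Chernoff estimate inside the proof of Lemma 3.2: `s = ⌊q^{1/3}⌋`
independent uniform strings in `[q]^m` collide on more than `ε·m` coordinates with
probability at most `exp(−ε² m / 8)`. -/
theorem random_strings_collision_probability
    (q m : ℕ) (hq : 2 ≤ q) (hm : 1 ≤ m)
    (ε : ℝ) (hε0 : 0 < ε) (hε1 : ε < 1)
    (hq' : 1 - ε / 2 ≤ (1 - (q : ℝ) ^ (-(2 : ℝ) / 3)) ^ ((q : ℝ) ^ ((1 : ℝ) / 3)))
    (s : ℕ) (hs : s = ⌊(q : ℝ) ^ ((1 : ℝ) / 3)⌋₊) (hs1 : 1 ≤ s) :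
    (({ω : Fin s → Fin m → Fin q |
        ε * (m : ℝ) <
          (({j : Fin m | ∃ i i' : Fin s, i ≠ i' ∧ ω i j = ω i' j}).ncard : ℝ)}).ncard : ℝ)
        / (Fintype.card (Fin s → Fin m → Fin q) : ℝ)
      ≤ Real.exp (-(ε ^ 2 * (m : ℝ) / 8)) := by
  classical
  have hq0 : (0 : ℝ) < q := by positivity
  -- column collision predicate
  set P : (Fin s → Fin q) → Prop := fun c => ∃ i i' : Fin s, i ≠ i' ∧ c i = c i' with hP
  -- number of colliding coordinates
  set F : (Fin s → Fin m → Fin q) → ℕ := fun ω =>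
    (Finset.univ.filter (fun j : Fin m => ∃ i i' : Fin s, i ≠ i' ∧ ω i j = ω i' j)).card
    with hF
  have hFn : ∀ ω : Fin s → Fin m → Fin q,
      ({j : Fin m | ∃ i i' : Fin s, i ≠ i' ∧ ω i j = ω i' j}).ncard = F ω := by
    intro ω; exact ncard_filter _
  -- bad set
  set Bad : Finset (Fin s → Fin m → Fin q) :=
    Finset.univ.filter (fun ω => ε * (m : ℝ) < (F ω : ℝ)) with hBad
  have hncard : ({ω : Fin s → Fin m → Fin q |
        ε * (m : ℝ) <
          (({j : Fin m | ∃ i i' : Fin s, i ≠ i' ∧ ω i j = ω i' j}).ncard : ℝ)}).ncard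
      = Bad.card := by
    rw [hBad]
    rw [← ncard_filter (fun ω : Fin s → Fin m → Fin q => ε * (m : ℝ) < (F ω : ℝ))]
    congr 1
    ext ω
    simp only [Set.mem_setOf_eq, hFn ω]
  -- weighted sum identity
  set g : (Fin s → Fin q) → ℝ := fun c => if P c then 2 else 1 with hg
  have hprod : ∀ ω : Fin s → Fin m → Fin q,
      ∏ j : Fin m, g (fun i => ω i j) = (2 : ℝ) ^ (F ω) := by
    intro ω
    rw [hF, hg]
    simp only []
    rw [Finset.prod_ite, Finset.prod_const, Finset.prod_const_one, mul_one]
  have hsum : ∑ ω : Fin s → Fin m → Fin q, (2 : ℝ) ^ (F ω)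
      = (∑ c : Fin s → Fin q, g c) ^ m := by
    rw [← sum_prod_cols s m q g]
    exact Finset.sum_congr rfl (fun ω _ => (hprod ω).symm)
  -- bound on the column sum
  have hK : (∑ c : Fin s → Fin q, g c) ≤ (1 + ε / 2) * (q : ℝ) ^ s := by
    have hsplit : (Finset.univ.filter P).card
        + (Finset.univ.filter (fun c => ¬ P c)).card
        = Fintype.card (Fin s → Fin q) :=
      Finset.card_filter_add_card_filter_not _
    have hNeg : (Finset.univ.filter (fun c : Fin s → Fin q => ¬ P c)).card
        = q.descFactorial s := by
      rw [← inj_count s q]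
      congr 1
      ext c
      simp only [Finset.mem_filter, Finset.mem_univ, true_and]
      simp only [Finset.mem_filter, Finset.mem_univ, true_and, hP, Function.Injective,
        not_exists]
      constructor
      · intro h a b hab
        by_contra hne
        exact h a b ⟨hne, hab⟩
      · rintro h a b ⟨hne, hab⟩
        exact hne (h hab)
    have hcardfun : Fintype.card (Fin s → Fin q) = q ^ s := by simp
    have hdesc := desc_lb q s hq hs ε hq'
    have hKle : ((Finset.univ.filter P).card : ℝ) ≤ (ε / 2) * (q : ℝ) ^ s := by
      have : ((Finset.univ.filter P).card : ℝ) = (q : ℝ) ^ s - (q.descFactorial s : ℝ) := by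
        have := hsplit
        rw [hNeg, hcardfun] at this
        have : ((Finset.univ.filter P).card : ℝ) + (q.descFactorial s : ℝ) = (q : ℝ) ^ s := by
          exact_mod_cast congrArg (Nat.cast : ℕ → ℝ) this
        linarith
      rw [this]
      nlinarith [hdesc]
    have : ∑ c : Fin s → Fin q, g c
        = (Fintype.card (Fin s → Fin q) : ℝ) + ((Finset.univ.filter P).card : ℝ) := by
      rw [hg]
      have : ∀ c : Fin s → Fin q, (if P c then (2:ℝ) else 1) = 1 + (if P c then (1:ℝ) else 0) := by
        intro c; split <;> norm_num
      simp_rw [this]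
      rw [Finset.sum_add_distrib, Finset.sum_const, Finset.sum_boole]
      simp [Finset.card_univ]
    rw [this, hcardfun]
    push_cast
    nlinarith [hKle]
  -- Markov step
  have h2pos : (0 : ℝ) < (2 : ℝ) ^ (ε * (m : ℝ)) := Real.rpow_pos_of_pos (by norm_num) _
  have hMarkov : (Bad.card : ℝ) * (2 : ℝ) ^ (ε * (m : ℝ))
      ≤ ∑ ω : Fin s → Fin m → Fin q, (2 : ℝ) ^ (F ω) := by
    calc (Bad.card : ℝ) * (2 : ℝ) ^ (ε * (m : ℝ))
        = ∑ _ω ∈ Bad, (2 : ℝ) ^ (ε * (m : ℝ)) := by rw [Finset.sum_const, nsmul_eq_mul]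
      _ ≤ ∑ ω ∈ Bad, (2 : ℝ) ^ (F ω) := by
          apply Finset.sum_le_sum
          intro ω hω
          have hωm : ε * (m : ℝ) ≤ (F ω : ℝ) := by
            have := (Finset.mem_filter.mp hω).2
            linarith
          calc (2 : ℝ) ^ (ε * (m : ℝ)) ≤ (2 : ℝ) ^ ((F ω : ℕ) : ℝ) :=
                Real.rpow_le_rpow_of_exponent_le (by norm_num) hωm
            _ = (2 : ℝ) ^ (F ω) := Real.rpow_natCast 2 (F ω)
      _ ≤ ∑ ω : Fin s → Fin m → Fin q, (2 : ℝ) ^ (F ω) := by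
          apply Finset.sum_le_sum_of_subset_of_nonneg (Finset.subset_univ _)
          intro ω _ _; positivity
  -- combine
  have hqs : (0 : ℝ) < (q : ℝ) ^ s := by positivity
  have hchain : (Bad.card : ℝ) * (2 : ℝ) ^ (ε * (m : ℝ))
      ≤ ((2 : ℝ) ^ ε * Real.exp (-(ε ^ 2 / 8)) * (q : ℝ) ^ s) ^ m := by
    refine hMarkov.trans ?_
    rw [hsum]
    apply pow_le_pow_left₀ (by positivity)
    refine hK.trans ?_
    have := analytic_key ε hε0 hε1
    nlinarith [Real.exp_pos (-(ε ^ 2 / 8)), hqs]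
  have hεm : ((2 : ℝ) ^ ε) ^ m = (2 : ℝ) ^ (ε * (m : ℝ)) := by
    rw [← Real.rpow_natCast ((2:ℝ) ^ ε) m, ← Real.rpow_mul (by norm_num)]
  have hexpm : (Real.exp (-(ε ^ 2 / 8))) ^ m = Real.exp (-(ε ^ 2 * (m : ℝ) / 8)) := by
    rw [← Real.exp_nat_mul]
    congr 1
    ring
  have hcard : (Fintype.card (Fin s → Fin m → Fin q) : ℝ) = ((q : ℝ) ^ s) ^ m := by
    rw [Fintype.card_fun]
    push_cast
    rw [Fintype.card_fun]
    push_cast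
    rw [← pow_mul, ← pow_mul, Nat.mul_comm]
    simp
  rw [hncard, hcard]
  rw [div_le_iff₀ (by positivity)]
  have hfinal : (Bad.card : ℝ) * (2 : ℝ) ^ (ε * (m : ℝ))
      ≤ (2 : ℝ) ^ (ε * (m : ℝ)) * (Real.exp (-(ε ^ 2 * (m : ℝ) / 8)) * ((q : ℝ) ^ s) ^ m) := by
    calc (Bad.card : ℝ) * (2 : ℝ) ^ (ε * (m : ℝ))
        ≤ ((2 : ℝ) ^ ε * Real.exp (-(ε ^ 2 / 8)) * (q : ℝ) ^ s) ^ m := hchain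
      _ = (2 : ℝ) ^ (ε * (m : ℝ)) * (Real.exp (-(ε ^ 2 * (m : ℝ) / 8)) * ((q : ℝ) ^ s) ^ m) := by
          rw [mul_pow, mul_pow, hεm, hexpm]
          ring
  have := (mul_le_mul_iff_of_pos_right h2pos).mp (by linarith [hfinal] :
    (Bad.card : ℝ) * (2 : ℝ) ^ (ε * (m : ℝ))
      ≤ (Real.exp (-(ε ^ 2 * (m : ℝ) / 8)) * ((q : ℝ) ^ s) ^ m) * (2 : ℝ) ^ (ε * (m : ℝ)))
  linarith [this]
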